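/- Daemonic ergotropy is at least the ergotropy of the reduced state: for a bipartite density matrix ρ^{SA} on H_S ⊗ H_A and any POVM {Π_a} on the ancilla A, one has Σ_a p_a E(ρ_a^S) ≥ E(ρ^S), where p_a = Tr[ρ^{SA}(1⊗Π_a)], ρ_a^S = Tr_A[ρ^{SA}(1⊗Π_a)]/p_a (for p_a > 0), and ρ^S = Tr_A ρ^{SA}. -/

import Mathlib

open Matrix
open scoped ComplexOrder

/-- Energy of a state `ρ` with respect to Hamiltonian `H`: `Tr[Hρ]` (real part). -/
noncomputable def energy {d : ℕ} (H ρ : Matrix (Fin d) (Fin d) ℂ) : ℝ :=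
  (Matrix.trace (H * ρ)).re

/-- Minimal energy achievable from `ρ` by unitaries (passive-state energy). -/
noncomputable def passiveEnergy {d : ℕ} (H ρ : Matrix (Fin d) (Fin d) ℂ) : ℝ :=
  sInf {x : ℝ | ∃ U ∈ Matrix.unitaryGroup (Fin d) ℂ, x = energy H (U * ρ * Uᴴ)}

/-- Ergotropy: maximal work extractable by unitaries. -/
noncomputable def ergotropy {d : ℕ} (H ρ : Matrix (Fin d) (Fin d) ℂ) : ℝ :=
  energy H ρ - passiveEnergy H ρ

open Kronecker

/-- Partial trace over the ancilla (second factor). -/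
noncomputable def ptraceA {dS dA : ℕ} (M : Matrix (Fin dS × Fin dA) (Fin dS × Fin dA) ℂ) :
    Matrix (Fin dS) (Fin dS) ℂ :=
  Matrix.of fun i j => ∑ k : Fin dA, M (i, k) (j, k)

/-- Probability of outcome associated to the POVM element `P` on the ancilla. -/
noncomputable def outProb {dS dA : ℕ} (ρSA : Matrix (Fin dS × Fin dA) (Fin dS × Fin dA) ℂ)
    (P : Matrix (Fin dA) (Fin dA) ℂ) : ℝ :=
  (Matrix.trace (ρSA * ((1 : Matrix (Fin dS) (Fin dS) ℂ) ⊗ₖ P))).re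

/-- Conditional (normalized) state of the system given the POVM element `P`. -/
noncomputable def condState {dS dA : ℕ} (ρSA : Matrix (Fin dS × Fin dA) (Fin dS × Fin dA) ℂ)
    (P : Matrix (Fin dA) (Fin dA) ℂ) : Matrix (Fin dS) (Fin dS) ℂ :=
  (outProb ρSA P)⁻¹ • ptraceA (ρSA * ((1 : Matrix (Fin dS) (Fin dS) ℂ) ⊗ₖ P))


open scoped Kronecker
section Aux

variable {m : Type*} [Fintype m] [DecidableEq m]

lemma psd_diag_nonneg {M : Matrix m m ℂ} (hM : M.PosSemidef) (i : m) :
    0 ≤ M i i := by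
  have := hM.dotProduct_mulVec_nonneg (Pi.single i 1)
  simpa [dotProduct, Pi.single_apply, apply_ite] using this

lemma psd_trace_nonneg {M : Matrix m m ℂ} (hM : M.PosSemidef) : 0 ≤ M.trace :=
  Finset.sum_nonneg fun i _ => psd_diag_nonneg hM i

lemma psd_trace_eq_re {M : Matrix m m ℂ} (hM : M.PosSemidef) :
    M.trace = ((M.trace.re : ℝ) : ℂ) := by
  have h := psd_trace_nonneg hM
  rw [Complex.nonneg_iff] at h
  exact (Complex.ext (by simp) (by simpa using h.2.symm))

lemma psd_eq_zero_of_trace_eq_zero {M : Matrix m m ℂ} (hM : M.PosSemidef)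
    (h : M.trace = 0) : M = 0 := by
  have hdiag : ∀ i, M i i = 0 := by
    intro i
    have := Finset.sum_eq_zero_iff_of_nonneg (fun i _ => psd_diag_nonneg hM i) |>.mp h
    exact this i (Finset.mem_univ i)
  ext i j
  have hcol : M *ᵥ Pi.single j 1 = 0 := by
    rw [← hM.dotProduct_mulVec_zero_iff]
    simpa [dotProduct, Pi.single_apply, apply_ite] using hdiag j
  have := congrFun hcol i
  simpa [mulVec_single] using this

end Aux

section PT
variable {dS dA : ℕ}

lemma trace_ptraceA (M : Matrix (Fin dS × Fin dA) (Fin dS × Fin dA) ℂ) :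
    (ptraceA M).trace = M.trace := by
  simp only [ptraceA, Matrix.trace, Matrix.diag, Matrix.of_apply]
  rw [← Finset.univ_product_univ, Finset.sum_product]

lemma ptraceA_sum {n : ℕ} (f : Fin n → Matrix (Fin dS × Fin dA) (Fin dS × Fin dA) ℂ) :
    ptraceA (∑ a, f a) = ∑ a, ptraceA (f a) := by
  ext i j
  simp only [ptraceA, Matrix.of_apply, Matrix.sum_apply]
  rw [Finset.sum_comm]

lemma ptraceA_posSemidef {M : Matrix (Fin dS × Fin dA) (Fin dS × Fin dA) ℂ}
    (hM : M.PosSemidef) : (ptraceA M).PosSemidef := by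
  refine Matrix.PosSemidef.of_dotProduct_mulVec_nonneg ?_ ?_
  · ext i j
    simp only [conjTranspose_apply, ptraceA, Matrix.of_apply, star_sum]
    refine Finset.sum_congr rfl fun k _ => ?_
    have := congrFun (congrFun hM.1 (i, k)) (j, k)
    simpa [conjTranspose_apply] using this
  · intro y
    have hk : ∀ k : Fin dA, (star fun p : Fin dS × Fin dA => if p.2 = k then y p.1 else 0) ⬝ᵥ
        M *ᵥ (fun p : Fin dS × Fin dA => if p.2 = k then y p.1 else 0)
        = ∑ i, ∑ j, star (y i) * (M (i, k) (j, k) * y j) := by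
      intro k
      simp only [dotProduct, mulVec, Fintype.sum_prod_type, Pi.star_apply, apply_ite (star ·),
        star_zero, ite_mul, zero_mul, mul_ite, mul_zero, Finset.sum_ite_eq',
        Finset.mem_univ, if_true]
      simp [Finset.mul_sum]
    have key : star y ⬝ᵥ (ptraceA M) *ᵥ y
        = ∑ k : Fin dA, ∑ i, ∑ j, star (y i) * (M (i, k) (j, k) * y j) := by
      have swap3 : ∀ f : Fin dS → Fin dS → Fin dA → ℂ,
          ∑ i, ∑ j, ∑ k, f i j k = ∑ k, ∑ i, ∑ j, f i j k := fun f =>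
        (Finset.sum_congr rfl fun i _ => Finset.sum_comm).trans Finset.sum_comm
      simp only [dotProduct, mulVec, ptraceA, Matrix.of_apply, Finset.sum_mul, Finset.mul_sum]
      exact swap3 _
    rw [key]
    refine Finset.sum_nonneg fun k _ => ?_
    rw [← hk k]
    exact hM.dotProduct_mulVec_nonneg _

end PT

section Kron
variable {dS dA : ℕ}

lemma collapse₁ {α β : Type*} [Fintype α] [DecidableEq α] [Fintype β] (j : α) (f : α → β → ℂ) :
    ∑ x1 : α, ∑ x2 : β, (if x1 = j then f x1 x2 else 0) = ∑ x2, f j x2 := by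
  rw [Finset.sum_comm]; simp

lemma collapse₂ {α β : Type*} [Fintype α] [DecidableEq α] [Fintype β] (j : α) (f : α → β → ℂ) :
    ∑ x1 : α, ∑ x2 : β, (if j = x1 then f x1 x2 else 0) = ∑ x2, f j x2 := by
  rw [Finset.sum_comm]; simp

lemma ptraceA_mul_kron_comm (M : Matrix (Fin dS × Fin dA) (Fin dS × Fin dA) ℂ)
    (X : Matrix (Fin dA) (Fin dA) ℂ) :
    ptraceA (M * ((1 : Matrix (Fin dS) (Fin dS) ℂ) ⊗ₖ X))
      = ptraceA (((1 : Matrix (Fin dS) (Fin dS) ℂ) ⊗ₖ X) * M) := by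
  ext i j
  simp only [ptraceA, Matrix.of_apply, Matrix.mul_apply, Fintype.sum_prod_type,
    kroneckerMap_apply, Matrix.one_apply, ite_mul, zero_mul, mul_ite, mul_zero, one_mul,
    Finset.sum_ite_eq, Finset.sum_ite_eq', Finset.mem_univ, if_true]
  simp only [collapse₁, collapse₂]
  rw [Finset.sum_comm]
  refine Finset.sum_congr rfl fun x _ => Finset.sum_congr rfl fun y _ => mul_comm _ _

lemma kron_one_conjTranspose {X : Matrix (Fin dA) (Fin dA) ℂ} (hX : X.IsHermitian) :
    ((1 : Matrix (Fin dS) (Fin dS) ℂ) ⊗ₖ X)ᴴ = (1 : Matrix (Fin dS) (Fin dS) ℂ) ⊗ₖ X := by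
  ext ⟨i, k⟩ ⟨j, l⟩
  have h1 : star (X l k) = X k l := by
    have := congrFun (congrFun hX k) l
    rwa [conjTranspose_apply] at this
  by_cases h : i = j
  · simp [conjTranspose_apply, kroneckerMap_apply, Matrix.one_apply, h, h1]
  · simp [conjTranspose_apply, kroneckerMap_apply, Matrix.one_apply, h, Ne.symm h]

lemma kron_one_sum {m : ℕ} (P : Fin m → Matrix (Fin dA) (Fin dA) ℂ) :
    (1 : Matrix (Fin dS) (Fin dS) ℂ) ⊗ₖ (∑ a, P a) = ∑ a, (1 : Matrix (Fin dS) (Fin dS) ℂ) ⊗ₖ P a := by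
  ext ⟨i, k⟩ ⟨j, l⟩
  simp [kroneckerMap_apply, Matrix.sum_apply, Finset.mul_sum]

end Kron

section SqrtCompat
open scoped MatrixOrder

noncomputable def Matrix.PosSemidef.sqrt {n : Type*} [Fintype n] [DecidableEq n]
    {M : Matrix n n ℂ} (_ : M.PosSemidef) : Matrix n n ℂ := CFC.sqrt M

lemma Matrix.PosSemidef.sqrt_mul_self {n : Type*} [Fintype n] [DecidableEq n]
    {M : Matrix n n ℂ} (hM : M.PosSemidef) : hM.sqrt * hM.sqrt = M :=
  CFC.sqrt_mul_sqrt_self M hM.nonneg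

lemma Matrix.PosSemidef.posSemidef_sqrt {n : Type*} [Fintype n] [DecidableEq n]
    {M : Matrix n n ℂ} (hM : M.PosSemidef) : hM.sqrt.PosSemidef :=
  (CFC.sqrt_nonneg M).posSemidef

end SqrtCompat

section Energy
variable {d : ℕ}

lemma posSemidef_real_smul {M : Matrix (Fin d) (Fin d) ℂ} (hM : M.PosSemidef)
    {c : ℝ} (hc : 0 ≤ c) : (c • M).PosSemidef := by
  have hcM : c • M = ((c : ℂ)) • M := by
    ext i j; simp [Complex.real_smul]
  rw [hcM]
  refine Matrix.PosSemidef.of_dotProduct_mulVec_nonneg ?_ ?_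
  · have : star ((c : ℂ)) = (c : ℂ) := by simp [Complex.ext_iff]
    rw [IsHermitian, conjTranspose_smul, this, hM.1]
  · intro x
    have := hM.dotProduct_mulVec_nonneg x
    calc (0 : ℂ) ≤ (c : ℂ) * (star x ⬝ᵥ M *ᵥ x) := by
          exact mul_nonneg (by simpa [Complex.nonneg_iff] using hc) this
      _ = star x ⬝ᵥ ((c : ℂ) • M) *ᵥ x := by
          rw [smul_mulVec, dotProduct_smul, smul_eq_mul]

lemma trace_mul_nonneg {A B : Matrix (Fin d) (Fin d) ℂ} (hA : A.PosSemidef)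
    (hB : B.PosSemidef) : 0 ≤ (A * B).trace := by
  have h1 : A * B = A * hB.sqrt * hB.sqrt := by
    rw [mul_assoc, hB.sqrt_mul_self]
  have h2 : (A * hB.sqrt * hB.sqrt).trace = (hB.sqrt * A * hB.sqrt).trace := by
    rw [trace_mul_comm, mul_assoc]
  have h3 : (hB.sqrt * A * hB.sqrt).PosSemidef := by
    have := hA.conjTranspose_mul_mul_same hB.sqrt
    rwa [hB.posSemidef_sqrt.1] at this
  rw [h1, h2]
  exact psd_trace_nonneg h3

lemma energy_smul (H ρ : Matrix (Fin d) (Fin d) ℂ) (c : ℝ) :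
    energy H (c • ρ) = c * energy H ρ := by
  simp only [energy, Matrix.mul_smul, trace_smul]
  simp [Complex.smul_re]

lemma energy_sum {m : ℕ} (H : Matrix (Fin d) (Fin d) ℂ) (ρ : Fin m → Matrix (Fin d) (Fin d) ℂ) :
    energy H (∑ a, ρ a) = ∑ a, energy H (ρ a) := by
  simp only [energy, Finset.mul_sum, trace_sum]
  exact Complex.re_sum _ _

/-- there is `c ≥ 0` with `H + c • 1` PSD -/
lemma exists_shift_posSemidef {H : Matrix (Fin d) (Fin d) ℂ} (hH : H.IsHermitian) :
    ∃ c : ℝ, 0 ≤ c ∧ (H + (c : ℂ) • 1).PosSemidef := by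
  refine ⟨∑ i, |hH.eigenvalues i|, Finset.sum_nonneg fun i _ => abs_nonneg _, ?_⟩
  set c : ℝ := ∑ i, |hH.eigenvalues i| with hc
  set U : Matrix (Fin d) (Fin d) ℂ := (hH.eigenvectorUnitary : Matrix (Fin d) (Fin d) ℂ)
  have hU : U * star U = 1 := (Matrix.mem_unitaryGroup_iff).mp hH.eigenvectorUnitary.2
  have hdiag : (Matrix.diagonal (fun i => ((hH.eigenvalues i + c : ℝ) : ℂ))).PosSemidef := by
    refine Matrix.PosSemidef.diagonal fun i => ?_
    have : 0 ≤ hH.eigenvalues i + c := by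
      have h1 : |hH.eigenvalues i| ≤ c :=
        Finset.single_le_sum (f := fun i => |hH.eigenvalues i|)
          (fun i _ => abs_nonneg _) (Finset.mem_univ i)
      nlinarith [neg_abs_le (hH.eigenvalues i)]
    simpa [Complex.nonneg_iff] using this
  have key : H + (c : ℂ) • 1 = U * Matrix.diagonal (fun i => ((hH.eigenvalues i + c : ℝ) : ℂ)) * Uᴴ := by
    have hspec : H = U * Matrix.diagonal (RCLike.ofReal ∘ hH.eigenvalues) * star U := by
      conv_lhs => rw [hH.spectral_theorem]
      simp [U, Unitary.conjStarAlgAut_apply]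
    have hone : U * ((c : ℂ) • 1) * Uᴴ = (c : ℂ) • 1 := by
      rw [Matrix.mul_smul, Matrix.smul_mul, Matrix.mul_one, ← Matrix.star_eq_conjTranspose, hU]
    have hd : Matrix.diagonal (fun i => ((hH.eigenvalues i + c : ℝ) : ℂ))
        = Matrix.diagonal (RCLike.ofReal ∘ hH.eigenvalues) + (c : ℂ) • 1 := by
      ext i j
      rcases eq_or_ne i j with h | h
      · subst h
        simp [Matrix.diagonal_apply_eq, Matrix.one_apply_eq, Function.comp, Complex.ofReal_add,
          add_comm]
      · simp [Matrix.diagonal_apply_ne _ h, Matrix.one_apply_ne h]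
    rw [hd, Matrix.mul_add, Matrix.add_mul, ← Matrix.star_eq_conjTranspose] at *
    rw [← hspec] at *
    rw [Matrix.star_eq_conjTranspose] at hone
    rw [Matrix.star_eq_conjTranspose]
    rw [hone]
  rw [key]
  have := hdiag.mul_mul_conjTranspose_same U
  exact this

end Energy

section Passive
variable {d : ℕ}

lemma le_energy_of_shift {H τ : Matrix (Fin d) (Fin d) ℂ} {c : ℝ}
    (hs : (H + (c : ℂ) • 1).PosSemidef) (hτ : τ.PosSemidef) :
    -(c * τ.trace.re) ≤ energy H τ := by
  have h := trace_mul_nonneg hs hτ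
  have hexp : ((H + (c : ℂ) • 1) * τ).trace = (H * τ).trace + (c : ℂ) * τ.trace := by
    rw [Matrix.add_mul, trace_add, Matrix.smul_mul, Matrix.one_mul, trace_smul, smul_eq_mul]
  rw [Complex.nonneg_iff, hexp] at h
  have := h.1
  simp only [Complex.add_re, Complex.mul_re, Complex.ofReal_re, Complex.ofReal_im] at this
  simp only [energy]
  linarith

lemma trace_conj_unitary {ρ U : Matrix (Fin d) (Fin d) ℂ}
    (hU : U ∈ Matrix.unitaryGroup (Fin d) ℂ) : (U * ρ * Uᴴ).trace = ρ.trace := by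
  rw [trace_mul_comm, ← mul_assoc, ← Matrix.star_eq_conjTranspose,
    (Matrix.mem_unitaryGroup_iff').mp hU, Matrix.one_mul]

lemma bddBelow_passive_set {H ρ : Matrix (Fin d) (Fin d) ℂ} (hH : H.IsHermitian)
    (hρ : ρ.PosSemidef) :
    BddBelow {x : ℝ | ∃ U ∈ Matrix.unitaryGroup (Fin d) ℂ, x = energy H (U * ρ * Uᴴ)} := by
  obtain ⟨c, _, hcpsd⟩ := exists_shift_posSemidef hH
  refine ⟨-(c * ρ.trace.re), ?_⟩
  rintro x ⟨U, hU, rfl⟩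
  have hUρ : (U * ρ * Uᴴ).PosSemidef := hρ.mul_mul_conjTranspose_same U
  have htr := trace_conj_unitary (ρ := ρ) hU
  have := le_energy_of_shift hcpsd hUρ
  rwa [htr] at this

lemma passiveEnergy_le_energy_conj {H ρ : Matrix (Fin d) (Fin d) ℂ} (hH : H.IsHermitian)
    (hρ : ρ.PosSemidef) {U : Matrix (Fin d) (Fin d) ℂ}
    (hU : U ∈ Matrix.unitaryGroup (Fin d) ℂ) :
    passiveEnergy H ρ ≤ energy H (U * ρ * Uᴴ) :=
  csInf_le (bddBelow_passive_set hH hρ) ⟨U, hU, rfl⟩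

end Passive

theorem daemonic_ergotropy_ge_ergotropy {dS dA n : ℕ}
    (H : Matrix (Fin dS) (Fin dS) ℂ) (hH : H.IsHermitian)
    (ρSA : Matrix (Fin dS × Fin dA) (Fin dS × Fin dA) ℂ)
    (hρ : ρSA.PosSemidef) (htr : ρSA.trace = 1)
    (Pov : Fin n → Matrix (Fin dA) (Fin dA) ℂ)
    (hPovpos : ∀ a, (Pov a).PosSemidef) (hPovsum : ∑ a, Pov a = 1) :
    ergotropy H (ptraceA ρSA) ≤ ∑ a, outProb ρSA (Pov a) * ergotropy H (condState ρSA (Pov a)) := by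
  set p : Fin n → ℝ := fun a => outProb ρSA (Pov a) with hp
  set σ : Fin n → Matrix (Fin dS) (Fin dS) ℂ :=
    fun a => ptraceA (ρSA * ((1 : Matrix (Fin dS) (Fin dS) ℂ) ⊗ₖ Pov a)) with hσ
  set ρc : Fin n → Matrix (Fin dS) (Fin dS) ℂ := fun a => condState ρSA (Pov a) with hρc
  set ρS : Matrix (Fin dS) (Fin dS) ℂ := ptraceA ρSA with hρS
  -- basic facts about σ a
  have hσfacts : ∀ a, (σ a).PosSemidef ∧ (σ a).trace = ((p a : ℝ) : ℂ) := by
    intro a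
    have hs : (hPovpos a).sqrt * (hPovpos a).sqrt = Pov a := (hPovpos a).sqrt_mul_self
    have hsH : ((hPovpos a).sqrt).IsHermitian := (hPovpos a).posSemidef_sqrt.1
    set s := (hPovpos a).sqrt
    have hkron : ((1 : Matrix (Fin dS) (Fin dS) ℂ) ⊗ₖ Pov a)
        = ((1 : Matrix (Fin dS) (Fin dS) ℂ) ⊗ₖ s) * ((1 : Matrix (Fin dS) (Fin dS) ℂ) ⊗ₖ s) := by
      rw [← Matrix.mul_kronecker_mul, Matrix.one_mul, hs]
    have hcomm : σ a = ptraceA (((1 : Matrix (Fin dS) (Fin dS) ℂ) ⊗ₖ s) * ρSA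
        * ((1 : Matrix (Fin dS) (Fin dS) ℂ) ⊗ₖ s)) := by
      rw [hσ]
      simp only
      rw [hkron, ← mul_assoc, ptraceA_mul_kron_comm, ← mul_assoc]
    have hT : (((1 : Matrix (Fin dS) (Fin dS) ℂ) ⊗ₖ s) * ρSA
        * ((1 : Matrix (Fin dS) (Fin dS) ℂ) ⊗ₖ s)).PosSemidef := by
      have := hρ.conjTranspose_mul_mul_same (B := (1 : Matrix (Fin dS) (Fin dS) ℂ) ⊗ₖ s)
      rwa [kron_one_conjTranspose hsH] at this
    have hpsd : (σ a).PosSemidef := by rw [hcomm]; exact ptraceA_posSemidef hT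
    have h1 : 0 ≤ (σ a).trace := by
      rw [hcomm, trace_ptraceA]
      exact psd_trace_nonneg hT
    have h2 : (σ a).trace = ((p a : ℝ) : ℂ) := by
      have := psd_trace_eq_re hpsd
      rw [this]
      congr 1
      rw [hσ]
      simp only
      rw [trace_ptraceA]
      rfl
    exact ⟨hpsd, h2⟩
  have hppos : ∀ a, 0 ≤ p a := by
    intro a
    have h := psd_trace_nonneg (hσfacts a).1
    rw [(hσfacts a).2, Complex.nonneg_iff] at h
    simpa using h.1
  -- σ a = p a • ρc a
  have hσ_eq : ∀ a, σ a = p a • ρc a := by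
    intro a
    by_cases hpa : p a = 0
    · have hz : σ a = 0 := by
        apply psd_eq_zero_of_trace_eq_zero (hσfacts a).1
        rw [(hσfacts a).2, hpa]; simp
      rw [hz, hpa, hρc]
      simp only [condState]
      rw [hσ] at hz
      simp only at hz
      rw [hz]
      simp
    · have : ρc a = (p a)⁻¹ • σ a := rfl
      rw [this, smul_smul, mul_inv_cancel₀ hpa, one_smul]
  have hρcpsd : ∀ a, (ρc a).PosSemidef := by
    intro a
    have : ρc a = (p a)⁻¹ • σ a := rfl
    rw [this]
    exact posSemidef_real_smul (hσfacts a).1 (inv_nonneg.mpr (hppos a))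
  -- sum of σ equals ρS
  have hsum : ∑ a, σ a = ρS := by
    rw [hσ, hρS, ← ptraceA_sum]
    congr 1
    rw [← Finset.mul_sum, ← kron_one_sum, hPovsum, Matrix.one_kronecker_one, Matrix.mul_one]
  -- energy decompositions
  have henergy : energy H ρS = ∑ a, p a * energy H (ρc a) := by
    rw [← hsum, energy_sum]
    exact Finset.sum_congr rfl fun a _ => by rw [hσ_eq a, energy_smul]
  have hdecomp : ∀ U : Matrix (Fin dS) (Fin dS) ℂ,
      energy H (U * ρS * Uᴴ) = ∑ a, p a * energy H (U * ρc a * Uᴴ) := by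
    intro U
    rw [← hsum, Finset.mul_sum, Finset.sum_mul, energy_sum]
    refine Finset.sum_congr rfl fun a _ => ?_
    rw [hσ_eq a, mul_smul_comm, smul_mul_assoc, energy_smul]
  -- passive energy comparison
  have hρSpsd : ρS.PosSemidef := ptraceA_posSemidef hρ
  have hpass : ∑ a, p a * passiveEnergy H (ρc a) ≤ passiveEnergy H ρS := by
    apply le_csInf
    · exact ⟨energy H ((1 : Matrix (Fin dS) (Fin dS) ℂ) * ρS * (1 : Matrix (Fin dS) (Fin dS) ℂ)ᴴ),
        1, Submonoid.one_mem _, rfl⟩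
    · rintro x ⟨U, hU, rfl⟩
      rw [hdecomp U]
      exact Finset.sum_le_sum fun a _ =>
        mul_le_mul_of_nonneg_left (passiveEnergy_le_energy_conj hH (hρcpsd a) hU) (hppos a)
  -- conclude
  have : ergotropy H ρS ≤ ∑ a, p a * ergotropy H (ρc a) := by
    simp only [ergotropy, mul_sub]
    rw [Finset.sum_sub_distrib, ← henergy]
    exact sub_le_sub le_rfl hpass
  simpa [hp, hρc] using this
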